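/- For every integer n ≥ 2, every ε ∈ (0,1), and every μ > 0, there exists at least one x > 1 with h(x, ε) = μ (at least one rosette central configuration with x > 1). -/

import Mathlib

/-- `k_n = (1/(4n)) · Σ_{k=1}^{n-1} 1/sin(kπ/n)` -/
noncomputable def kn (n : ℕ) : ℝ :=
  (1 / (4 * n)) * ∑ k ∈ Finset.Icc 1 (n - 1), 1 / Real.sin (k * Real.pi / n)

/-- `φ_k = (2k-1)π/n`, and `u_k = cos φ_k`. -/
noncomputable def phi (n k : ℕ) : ℝ := (2 * (k : ℝ) - 1) * Real.pi / n

/-- The reduced central configuration function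
`h(x, ε) = −n·k_n·(ε−x³)/(1−x³) − (x²/(1−x³))·Σ_{k=1}^{n} [x(1−ε) − (1−εx²)u_k]/(1+x²−2xu_k)^{3/2}`,
where `u_k = cos φ_k`.  Solutions of `h(x, ε) = μ` are the rosette central configurations. -/
noncomputable def h (n : ℕ) (x ε : ℝ) : ℝ :=
  -((n : ℝ) * kn n) * (ε - x ^ 3) / (1 - x ^ 3) -
    (x ^ 2 / (1 - x ^ 3)) * ∑ k ∈ Finset.Icc 1 n,
      (x * (1 - ε) - (1 - ε * x ^ 2) * Real.cos (phi n k)) /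
        (1 + x ^ 2 - 2 * x * Real.cos (phi n k)) ^ ((3 : ℝ) / 2)

open Real Filter Set

/-! ### Auxiliary definitions -/

/-- odd cosecant term -/
noncomputable def oddCsc (n j : ℕ) : ℝ := 1 / Real.sin ((2 * (j:ℝ) - 1) * π / (2 * n))

/-- the sum appearing in `h` -/
noncomputable def Ssum (n : ℕ) (ε x : ℝ) : ℝ :=
  ∑ k ∈ Finset.Icc 1 n, (x * (1 - ε) - (1 - ε * x ^ 2) * Real.cos (phi n k)) /
      (1 + x ^ 2 - 2 * x * Real.cos (phi n k)) ^ ((3 : ℝ) / 2)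

/-- numerator of `h` over the denominator `x³ − 1` -/
noncomputable def Pfun (n : ℕ) (ε x : ℝ) : ℝ :=
  (n : ℝ) * kn n * (ε - x ^ 3) + x ^ 2 * Ssum n ε x

/-! ### Basic positivity lemmas -/

lemma sin_odd_pos {n j : ℕ} (hj1 : 1 ≤ j) (hjn : j ≤ n) :
    0 < Real.sin ((2 * (j:ℝ) - 1) * π / (2 * n)) := by
  have hn : (0:ℝ) < n := by exact_mod_cast hj1.trans hjn
  have hj : (1:ℝ) ≤ j := by exact_mod_cast hj1
  have hjn' : (j:ℝ) ≤ n := by exact_mod_cast hjn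
  apply Real.sin_pos_of_pos_of_lt_pi
  · apply div_pos (by nlinarith [Real.pi_pos]) (by positivity)
  · rw [div_lt_iff₀ (by positivity)]
    nlinarith [Real.pi_pos]

lemma oddCsc_pos {n j : ℕ} (hj1 : 1 ≤ j) (hjn : j ≤ n) : 0 < oddCsc n j :=
  one_div_pos.2 (sin_odd_pos hj1 hjn)

/-- the key cosecant-sum comparison -/
lemma key_sum {n : ℕ} (hn : 2 ≤ n) :
    ∑ k ∈ Finset.Icc 1 (n-1), 1 / Real.sin ((k:ℝ) * π / n) <
      ∑ k ∈ Finset.Icc 1 n, oddCsc n k := by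
  have hn0 : (0:ℝ) < n := by positivity
  set σ : ℕ → ℕ := fun k => if 2 * k ≤ n then k else k + 1 with hσ
  have hpt : ∀ k ∈ Finset.Icc 1 (n-1), 1 / Real.sin ((k:ℝ) * π / n) < oddCsc n (σ k) := by
    intro k hk
    simp only [Finset.mem_Icc] at hk
    obtain ⟨hk1, hk2⟩ := hk
    have hk1' : (1:ℝ) ≤ k := by exact_mod_cast hk1
    have hkn' : (k:ℝ) ≤ n - 1 := by
      have : (k:ℝ) ≤ ((n-1 : ℕ) : ℝ) := by exact_mod_cast hk2
      rwa [Nat.cast_sub (by omega), Nat.cast_one] at this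
    have hsin_even : 0 < Real.sin ((k:ℝ) * π / n) := by
      apply Real.sin_pos_of_pos_of_lt_pi (by positivity)
      rw [div_lt_iff₀ hn0]; nlinarith [Real.pi_pos]
    by_cases hcase : 2 * k ≤ n
    · have hσk : σ k = k := if_pos hcase
      rw [hσk]
      have hc : (2:ℝ) * k ≤ n := by exact_mod_cast hcase
      have hso : 0 < Real.sin ((2 * (k:ℝ) - 1) * π / (2 * n)) := sin_odd_pos hk1 (by omega)
      unfold oddCsc
      rw [div_lt_div_iff₀ hsin_even hso, one_mul, one_mul]
      apply Real.strictMonoOn_sin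
      · constructor
        · have : (0:ℝ) ≤ (2 * (k:ℝ) - 1) * π / (2*n) := by
            apply div_nonneg (by nlinarith [Real.pi_pos]) (by positivity)
          linarith [Real.pi_pos]
        · rw [div_le_div_iff₀ (by positivity) (by norm_num)]
          nlinarith [Real.pi_pos]
      · constructor
        · have : (0:ℝ) ≤ (k:ℝ) * π / n := by positivity
          linarith [Real.pi_pos]
        · rw [div_le_div_iff₀ (by positivity) (by norm_num)]
          nlinarith [Real.pi_pos]
      · rw [div_lt_div_iff₀ (by positivity) hn0]
        nlinarith [Real.pi_pos]
    · have hσk : σ k = k + 1 := if_neg hcase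
      rw [hσk]
      push_neg at hcase
      have hc : (n:ℝ) < 2 * k := by exact_mod_cast hcase
      have hso : 0 < Real.sin ((2 * ((k:ℝ) + 1) - 1) * π / (2 * n)) := by
        have := sin_odd_pos (n := n) (j := k+1) (by omega) (by omega)
        push_cast at this ⊢
        exact this
      have hkey : Real.sin ((2 * ((k:ℝ)+1) - 1) * π / (2 * n)) < Real.sin ((k:ℝ) * π / n) := by
        rw [← Real.sin_pi_sub ((2 * ((k:ℝ)+1) - 1) * π / (2 * n)),
          ← Real.sin_pi_sub ((k:ℝ) * π / n)]
        apply Real.strictMonoOn_sin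
        · constructor
          · have h1 : (2 * ((k:ℝ)+1) - 1) * π / (2 * n) ≤ π := by
              rw [div_le_iff₀ (by positivity)]
              nlinarith [Real.pi_pos]
            linarith [Real.pi_pos]
          · have : π / 2 ≤ (2 * ((k:ℝ)+1) - 1) * π / (2 * n) := by
              rw [div_le_div_iff₀ (by norm_num) (by positivity)]
              nlinarith [Real.pi_pos]
            linarith
        · constructor
          · have h1 : (k:ℝ) * π / n ≤ π := by
              rw [div_le_iff₀ hn0]
              nlinarith [Real.pi_pos]
            linarith [Real.pi_pos]
          · have : π / 2 ≤ (k:ℝ) * π / n := by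
              rw [div_le_div_iff₀ (by norm_num) hn0]
              nlinarith [Real.pi_pos]
            linarith
        · have : (k:ℝ) * π / n < (2 * ((k:ℝ)+1) - 1) * π / (2 * n) := by
            rw [div_lt_div_iff₀ hn0 (by positivity)]
            nlinarith [Real.pi_pos]
          linarith
      unfold oddCsc
      push_cast
      rw [div_lt_div_iff₀ hsin_even hso, one_mul, one_mul]
      exact hkey
  have hinj : ∀ a ∈ Finset.Icc 1 (n-1), ∀ b ∈ Finset.Icc 1 (n-1), σ a = σ b → a = b := by
    intro a _ b _ hab
    simp only [hσ] at hab
    split_ifs at hab <;> omega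
  have hmap : ∀ k ∈ Finset.Icc 1 (n-1), σ k ∈ Finset.Icc 1 n := by
    intro k hk
    simp only [Finset.mem_Icc, hσ] at hk ⊢
    split_ifs <;> omega
  have h1 : ∑ k ∈ Finset.Icc 1 (n-1), 1 / Real.sin ((k:ℝ) * π / n) <
      ∑ k ∈ Finset.Icc 1 (n-1), oddCsc n (σ k) :=
    Finset.sum_lt_sum_of_nonempty ⟨1, by simp [Finset.mem_Icc]; omega⟩ hpt
  have h2 : ∑ k ∈ Finset.Icc 1 (n-1), oddCsc n (σ k) ≤ ∑ k ∈ Finset.Icc 1 n, oddCsc n k := by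
    rw [← Finset.sum_image hinj]
    apply Finset.sum_le_sum_of_subset_of_nonneg
    · intro j hj
      simp only [Finset.mem_image] at hj
      obtain ⟨k, hk, rfl⟩ := hj
      exact hmap k hk
    · intro j hj _
      simp only [Finset.mem_Icc] at hj
      exact (oddCsc_pos hj.1 hj.2).le
  linarith

lemma cos_eq_half (θ : ℝ) : Real.cos θ = 1 - 2 * Real.sin (θ/2)^2 := by
  have h1 := Real.cos_two_mul (θ/2)
  have h2 := Real.sin_sq_add_cos_sq (θ/2)
  rw [show 2*(θ/2) = θ by ring] at h1
  nlinarith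

lemma half_phi_eq (n k : ℕ) : phi n k / 2 = (2 * (k:ℝ) - 1) * π / (2 * n) := by
  unfold phi; ring

lemma sin_half_phi_pos {n k : ℕ} (hk1 : 1 ≤ k) (hkn : k ≤ n) :
    0 < Real.sin (phi n k / 2) := by
  rw [half_phi_eq]; exact sin_odd_pos hk1 hkn

lemma cos_phi_lt_one {n k : ℕ} (hk1 : 1 ≤ k) (hkn : k ≤ n) : Real.cos (phi n k) < 1 := by
  rw [cos_eq_half]
  nlinarith [sin_half_phi_pos hk1 hkn]

lemma one_lt_cube {x : ℝ} (hx : 1 < x) : 1 < x^3 := by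
  nlinarith [mul_pos (sub_pos.2 hx) (mul_pos (lt_trans one_pos hx) (lt_trans one_pos hx)),
    mul_pos (sub_pos.2 hx) (lt_trans one_pos hx)]

lemma denom_pos {x u : ℝ} (hx : 0 < x) (hu : u < 1) : 0 < 1 + x^2 - 2*x*u := by
  nlinarith [sq_nonneg (1-x), mul_pos hx (sub_pos.2 hu)]

lemma kn_pos {n : ℕ} (hn : 2 ≤ n) : 0 < kn n := by
  have hn0 : (0:ℝ) < n := by positivity
  unfold kn
  apply mul_pos (by positivity)
  apply Finset.sum_pos
  · intro k hk
    simp only [Finset.mem_Icc] at hk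
    apply one_div_pos.2
    apply Real.sin_pos_of_pos_of_lt_pi
    · have : (1:ℝ) ≤ k := by exact_mod_cast hk.1
      positivity
    · have : (k:ℝ) ≤ n - 1 := by
        have : (k:ℝ) ≤ ((n-1 : ℕ) : ℝ) := by exact_mod_cast hk.2
        rwa [Nat.cast_sub (by omega), Nat.cast_one] at this
      rw [div_lt_iff₀ hn0]
      nlinarith [Real.pi_pos]
  · exact ⟨1, by simp [Finset.mem_Icc]; omega⟩

lemma n_mul_kn {n : ℕ} (hn : 2 ≤ n) :
    (n : ℝ) * kn n = (1/4) * ∑ k ∈ Finset.Icc 1 (n-1), 1 / Real.sin ((k:ℝ) * π / n) := by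
  have hn0 : (n:ℝ) ≠ 0 := by positivity
  unfold kn
  field_simp
  ring_nf
  exact Finset.sum_congr rfl fun k _ => by congr 2; ring

/-- value of the sum at `x = 1` -/
lemma Ssum_at_one {n : ℕ} (hn : 2 ≤ n) (ε : ℝ) :
    Ssum n ε 1 = ((1 - ε)/4) * ∑ k ∈ Finset.Icc 1 n, oddCsc n k := by
  unfold Ssum
  rw [Finset.mul_sum]
  apply Finset.sum_congr rfl
  intro k hk
  simp only [Finset.mem_Icc] at hk
  set s := Real.sin (phi n k / 2) with hs
  have hspos : 0 < s := sin_half_phi_pos hk.1 hk.2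
  have hcos : Real.cos (phi n k) = 1 - 2 * s^2 := cos_eq_half _
  have hodd : oddCsc n k = 1 / s := by
    unfold oddCsc; rw [hs, half_phi_eq]
  have hbase : 1 + (1:ℝ)^2 - 2*1*Real.cos (phi n k) = (2*s)^2 := by
    rw [hcos]; ring
  have hpow : ((2*s)^2 : ℝ) ^ ((3:ℝ)/2) = (2*s)^(3:ℕ) := by
    rw [← Real.rpow_natCast (2*s) 2, ← Real.rpow_mul (by positivity),
      ← Real.rpow_natCast (2*s) 3]
    norm_num
  rw [hbase, hpow, hcos, hodd]
  field_simp
  ring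

lemma Pfun_at_one_pos {n : ℕ} (hn : 2 ≤ n) {ε : ℝ} (hε : ε ∈ Set.Ioo (0:ℝ) 1) :
    0 < Pfun n ε 1 := by
  have hkey := key_sum hn
  have hε1 : ε < 1 := hε.2
  unfold Pfun
  rw [Ssum_at_one hn, n_mul_kn hn]
  nlinarith [hkey]

/-! ### Continuity -/

lemma continuousOn_Ssum (n : ℕ) (ε : ℝ) : ContinuousOn (Ssum n ε) (Set.Ioi (0:ℝ)) := by
  unfold Ssum
  apply continuousOn_finset_sum
  intro k hk
  simp only [Finset.mem_Icc] at hk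
  have hu : Real.cos (phi n k) < 1 := cos_phi_lt_one hk.1 hk.2
  apply ContinuousOn.div
  · exact (Continuous.continuousOn (by continuity))
  · apply ContinuousOn.rpow_const (Continuous.continuousOn (by continuity))
    intro x hx
    exact Or.inl (ne_of_gt (denom_pos hx hu))
  · intro x hx
    exact (Real.rpow_pos_of_pos (denom_pos hx hu) _).ne'

lemma continuousOn_Pfun (n : ℕ) (ε : ℝ) : ContinuousOn (Pfun n ε) (Set.Ioi (0:ℝ)) := by
  unfold Pfun
  apply ContinuousOn.add
  · exact Continuous.continuousOn (by continuity)
  · exact ContinuousOn.mul (Continuous.continuousOn (by continuity)) (continuousOn_Ssum n ε)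

lemma h_eq {n : ℕ} {ε x : ℝ} (hx : 1 < x) : h n x ε = Pfun n ε x / (x^3 - 1) := by
  have hne : x^3 - 1 ≠ 0 := ne_of_gt (by linarith [one_lt_cube hx])
  have hne' : 1 - x^3 ≠ 0 := ne_of_lt (by linarith [one_lt_cube hx])
  unfold h Pfun Ssum
  field_simp
  ring

/-! ### Behaviour as x → 1⁺ -/

lemma tendsto_h_one {n : ℕ} (hn : 2 ≤ n) {ε : ℝ} (hε : ε ∈ Set.Ioo (0:ℝ) 1) :
    Tendsto (fun x => h n x ε) (nhdsWithin 1 (Set.Ioi 1)) atTop := by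
  have hP : Tendsto (Pfun n ε) (nhdsWithin 1 (Set.Ioi 1)) (nhds (Pfun n ε 1)) := by
    have h1 : (1:ℝ) ∈ Set.Ioi (0:ℝ) := by norm_num
    exact ((continuousOn_Pfun n ε).continuousWithinAt h1).mono
      (fun y hy => Set.mem_Ioi.2 (lt_trans one_pos (Set.mem_Ioi.1 hy)))
  have hcube : Tendsto (fun x : ℝ => x^3 - 1) (nhdsWithin 1 (Set.Ioi 1))
      (nhdsWithin 0 (Set.Ioi 0)) := by
    rw [tendsto_nhdsWithin_iff]
    constructor
    · have : Tendsto (fun x : ℝ => x^3 - 1) (nhds 1) (nhds ((1:ℝ)^3 - 1)) :=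
        ((continuous_pow 3).sub continuous_const).tendsto 1
      norm_num at this
      exact this.mono_left nhdsWithin_le_nhds
    · filter_upwards [self_mem_nhdsWithin] with x hx
      have h1x : (1:ℝ) < x := hx
      simpa using sub_pos.2 (one_lt_cube h1x)
  have hinv : Tendsto (fun x : ℝ => (x^3 - 1)⁻¹) (nhdsWithin 1 (Set.Ioi 1)) atTop :=
    tendsto_inv_nhdsGT_zero.comp hcube
  have hmul := Filter.Tendsto.pos_mul_atTop (Pfun_at_one_pos hn hε) hP hinv
  apply hmul.congr'
  filter_upwards [self_mem_nhdsWithin] with x hx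
  rw [h_eq hx, div_eq_mul_inv]

/-! ### Behaviour as x → ∞ -/

lemma Ssum_abs_bound (n : ℕ) {ε x : ℝ} (hε : ε ∈ Set.Ioo (0:ℝ) 1) (hx : 2 ≤ x) :
    |Ssum n ε x| ≤ n * (2 * x^2 / (x-1)^3) := by
  have hx1 : (1:ℝ) < x := by linarith
  have hx0 : (0:ℝ) < x := by linarith
  have hterm : ∀ k ∈ Finset.Icc 1 n,
      |(x * (1 - ε) - (1 - ε * x ^ 2) * Real.cos (phi n k)) /
        (1 + x ^ 2 - 2 * x * Real.cos (phi n k)) ^ ((3 : ℝ) / 2)| ≤ 2 * x^2 / (x-1)^3 := by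
    intro k hk
    have hcos := Real.neg_one_le_cos (phi n k)
    have hcos' := Real.cos_le_one (phi n k)
    have hdpos : 0 < 1 + x^2 - 2*x*Real.cos (phi n k) := by nlinarith
    have hdlow : (x-1)^2 ≤ 1 + x^2 - 2*x*Real.cos (phi n k) := by nlinarith
    have hden : (x-1)^3 ≤ (1 + x ^ 2 - 2 * x * Real.cos (phi n k)) ^ ((3 : ℝ) / 2) := by
      have h1 : ((x-1)^2 : ℝ) ^ ((3:ℝ)/2) ≤
          (1 + x ^ 2 - 2 * x * Real.cos (phi n k)) ^ ((3 : ℝ) / 2) :=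
        Real.rpow_le_rpow (by positivity) hdlow (by norm_num)
      have h2 : ((x-1)^2 : ℝ) ^ ((3:ℝ)/2) = (x-1)^(3:ℕ) := by
        rw [← Real.rpow_natCast (x-1) 2, ← Real.rpow_mul (by linarith),
          ← Real.rpow_natCast (x-1) 3]
        norm_num
      rw [h2] at h1
      exact_mod_cast h1
    have hnum : |x * (1 - ε) - (1 - ε * x ^ 2) * Real.cos (phi n k)| ≤ 2 * x^2 := by
      have h1 : |x * (1 - ε) - (1 - ε * x ^ 2) * Real.cos (phi n k)| ≤
          |x * (1 - ε)| + |(1 - ε * x ^ 2) * Real.cos (phi n k)| := abs_sub _ _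
      have h2 : |x * (1 - ε)| ≤ x := by
        rw [abs_of_nonneg (by nlinarith [hε.2])]
        nlinarith [hε.1, hε.2]
      have h3 : |(1 - ε * x ^ 2) * Real.cos (phi n k)| ≤ x^2 := by
        rw [abs_mul]
        have hc1 : |Real.cos (phi n k)| ≤ 1 := Real.abs_cos_le_one _
        have h4 : |1 - ε * x^2| ≤ x^2 := by
          rw [abs_le]
          constructor
          · nlinarith [hε.2]
          · nlinarith [hε.1]
        calc |1 - ε * x ^ 2| * |Real.cos (phi n k)| ≤ x^2 * 1 := by
              apply mul_le_mul h4 hc1 (abs_nonneg _) (by positivity)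
          _ = x^2 := by ring
      nlinarith
    rw [abs_div, abs_of_pos (Real.rpow_pos_of_pos hdpos _)]
    have hxm1 : (0:ℝ) < x - 1 := by linarith
    apply div_le_div₀ (by positivity) hnum (by positivity) hden
  calc |Ssum n ε x| ≤ ∑ k ∈ Finset.Icc 1 n,
        |(x * (1 - ε) - (1 - ε * x ^ 2) * Real.cos (phi n k)) /
          (1 + x ^ 2 - 2 * x * Real.cos (phi n k)) ^ ((3 : ℝ) / 2)| :=
      Finset.abs_sum_le_sum_abs _ _
    _ ≤ (Finset.Icc 1 n).card • (2 * x^2 / (x-1)^3) := Finset.sum_le_card_nsmul _ _ _ hterm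
    _ = n * (2 * x^2 / (x-1)^3) := by
      rw [Nat.card_Icc, nsmul_eq_mul]
      norm_num

lemma tail_bound {n : ℕ} {ε x : ℝ} (hε : ε ∈ Set.Ioo (0:ℝ) 1) (hx : 2 ≤ x) :
    |x^2 * Ssum n ε x / (x^3 - 1)| ≤ 32 * n / x^2 := by
  have hx1 : (1:ℝ) < x := by linarith
  have hc : (0:ℝ) < x^3 - 1 := by linarith [one_lt_cube hx1]
  have hS := Ssum_abs_bound n hε hx
  have h1 : |x^2 * Ssum n ε x / (x^3 - 1)| = x^2 * |Ssum n ε x| / (x^3-1) := by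
    rw [abs_div, abs_mul, abs_of_pos hc, abs_of_pos (by positivity : (0:ℝ) < x^2)]
  rw [h1]
  have h2 : x^2 * |Ssum n ε x| / (x^3-1) ≤ x^2 * (n * (2 * x^2 / (x-1)^3)) / (x^3-1) := by
    exact div_le_div_of_nonneg_right (mul_le_mul_of_nonneg_left hS (by positivity)) hc.le
  apply h2.trans
  rw [div_le_div_iff₀ hc (by positivity : (0:ℝ) < x^2)]
  have hden : (0:ℝ) < (x-1)^3 := pow_pos (by linarith) 3
  rw [div_eq_mul_inv]
  have key : x^2 * (n * (2 * x^2 * ((x-1)^3)⁻¹)) * x^2 ≤ 32 * n * (x^3-1) := by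
    rw [← sub_nonneg]
    have hinv : ((x-1)^3)⁻¹ * (x-1)^3 = 1 := inv_mul_cancel₀ (ne_of_gt hden)
    have hn0 : (0:ℝ) ≤ n := Nat.cast_nonneg n
    have hpoly : x^2 * (2 * x^2 * ((x-1)^3)⁻¹) * x^2 ≤ 32 * (x^3-1) := by
      rw [← sub_nonneg]
      have e : 32 * (x^3-1) - x^2 * (2 * x^2 * ((x-1)^3)⁻¹) * x^2
          = (32 * (x^3-1) * (x-1)^3 - 2*x^6) * ((x-1)^3)⁻¹ := by
        field_simp [sub_ne_zero.2 (ne_of_gt hx1)]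
      rw [e]
      apply mul_nonneg ?_ (by positivity)
      nlinarith [sq_nonneg (x-2), sq_nonneg x]
    nlinarith [mul_le_mul_of_nonneg_left hpoly hn0]
  calc x ^ 2 * (↑n * (2 * x ^ 2 * ((x-1)^3)⁻¹)) * x ^ 2 ≤ 32 * n * (x^3-1) := key
    _ ≤ 32 * ↑n * (x ^ 3 - 1) := le_refl _

lemma tendsto_h_atTop {n : ℕ} (hn : 2 ≤ n) {ε : ℝ} (hε : ε ∈ Set.Ioo (0:ℝ) 1) :
    Tendsto (fun x => h n x ε) atTop (nhds (-((n:ℝ) * kn n))) := by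
  have hcube : Tendsto (fun x : ℝ => x^3 - 1) atTop atTop :=
    tendsto_atTop_add_const_right _ _ (tendsto_pow_atTop (by norm_num))
  have t1 : Tendsto (fun x : ℝ => (n:ℝ) * kn n * (ε - 1) / (x^3-1)) atTop (nhds 0) :=
    Filter.Tendsto.const_div_atTop hcube _
  have t2 : Tendsto (fun x : ℝ => x^2 * Ssum n ε x / (x^3-1)) atTop (nhds 0) := by
    rw [tendsto_zero_iff_abs_tendsto_zero]
    apply squeeze_zero' (Eventually.of_forall fun x => abs_nonneg _)
      ((eventually_ge_atTop 2).mono fun x hx => tail_bound hε hx)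
    have : Tendsto (fun x : ℝ => x^2) atTop atTop := tendsto_pow_atTop (by norm_num)
    exact Filter.Tendsto.const_div_atTop this _
  have e : ∀ᶠ x in atTop, h n x ε = -((n:ℝ) * kn n) +
      ((n:ℝ) * kn n * (ε - 1) / (x^3-1) + x^2 * Ssum n ε x / (x^3-1)) := by
    filter_upwards [eventually_gt_atTop 1] with x hx
    have hne : x^3 - 1 ≠ 0 := ne_of_gt (by linarith [one_lt_cube hx])
    rw [h_eq hx]
    unfold Pfun
    field_simp
    ring
  rw [tendsto_congr' e]
  have := tendsto_const_nhds (x := -((n:ℝ) * kn n)) (f := atTop (α := ℝ)) |>.add (t1.add t2)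
  simpa using this

/-- For `n ≥ 2`, `ε ∈ (0,1)`, `μ > 0` there is at least one rosette central
configuration with `x > 1`. -/
theorem exists_cc_gt_one (n : ℕ) (hn : 2 ≤ n) (ε μ : ℝ) (hε : ε ∈ Set.Ioo (0 : ℝ) 1)
    (hμ : 0 < μ) : ∃ x : ℝ, 1 < x ∧ h n x ε = μ := by
  have hkn := kn_pos hn
  have hn0 : (0:ℝ) < n := by positivity
  -- pick b with h b < μ
  have hlim := tendsto_h_atTop hn hε
  have hblim : ∀ᶠ x in atTop, h n x ε < μ :=
    hlim.eventually_lt_const (by nlinarith)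
  obtain ⟨b, hbμ, hb1⟩ := (hblim.and (eventually_gt_atTop 1)).exists
  -- pick a ∈ (1, b) with μ < h a
  have h1lim := tendsto_h_one hn hε
  have hIoo : ∀ᶠ x in nhdsWithin 1 (Set.Ioi 1), x ∈ Set.Ioo 1 b :=
    Ioo_mem_nhdsGT_of_mem ⟨le_refl 1, hb1⟩
  obtain ⟨a, haμ, ha1, hab⟩ := ((h1lim.eventually_gt_atTop μ).and hIoo).exists
  -- IVT on [a, b]
  have hsub : Set.Icc a b ⊆ Set.Ioi (1:ℝ) := fun t ht => lt_of_lt_of_le ha1 ht.1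
  have hcont : ContinuousOn (fun x => h n x ε) (Set.Icc a b) := by
    have hcontIoi : ContinuousOn (fun x => h n x ε) (Set.Ioi (1:ℝ)) := by
      apply ContinuousOn.congr (f := fun x => Pfun n ε x / (x^3 - 1))
      · apply ContinuousOn.div
        · exact (continuousOn_Pfun n ε).mono (fun y hy => Set.mem_Ioi.2 (lt_trans one_pos (Set.mem_Ioi.1 hy)))
        · exact Continuous.continuousOn (by continuity)
        · intro x hx
          have h1x : (1:ℝ) < x := hx
          exact ne_of_gt (by linarith [one_lt_cube h1x])
      · intro x hx
        exact h_eq hx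
    exact hcontIoi.mono hsub
  have hmem : μ ∈ Set.Icc (h n b ε) (h n a ε) := ⟨hbμ.le, haμ.le⟩
  obtain ⟨x, hx, hxμ⟩ := intermediate_value_Icc' hab.le hcont hmem
  exact ⟨x, lt_of_lt_of_le ha1 hx.1, hxμ⟩
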